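/- For every integer n ≥ 3 there exists a positive integer N such that any set of N points in the Euclidean plane, no three collinear, contains n points in convex position (i.e., n points that are the vertices of a convex polygon). -/

import Mathlib

noncomputable def orient (a b c : ℝ × ℝ) : ℝ :=
  (b.1 - a.1) * (c.2 - a.2) - (b.2 - a.2) * (c.1 - a.1)

lemma orient_cyc (a b c : ℝ × ℝ) : orient a b c = orient b c a := by unfold orient; ring
lemma orient_swap (a b c : ℝ × ℝ) : orient a b c = - orient a c b := by unfold orient; ring
lemma orient_swap12 (a b c : ℝ × ℝ) : orient a b c = - orient b a c := by unfold orient; ring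
lemma orient_rev (a b c : ℝ × ℝ) : orient a b c = - orient c b a := by unfold orient; ring
lemma orient_self1 (a c : ℝ × ℝ) : orient a a c = 0 := by unfold orient; ring
lemma orient_self2 (a b : ℝ × ℝ) : orient a b b = 0 := by unfold orient; ring
lemma orient_self3 (a b : ℝ × ℝ) : orient a b a = 0 := by unfold orient; ring

lemma convex_halfplane (a b : ℝ × ℝ) : Convex ℝ {x : ℝ × ℝ | 0 ≤ orient a b x} := by
  intro x hx y hy s t hs ht hst
  simp only [Set.mem_setOf_eq] at *
  have : orient a b (s • x + t • y) = s * orient a b x + t * orient a b y := by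
    unfold orient
    simp only [Prod.fst_add, Prod.snd_add, Prod.smul_fst, Prod.smul_snd, smul_eq_mul]
    linear_combination (((b.1 - a.1) * a.2 - (b.2 - a.2) * a.1)) * hst
  rw [this]
  positivity


lemma not_mem_hull (a b p : ℝ × ℝ) (T : Set (ℝ × ℝ))
    (h : ∀ x ∈ T, 0 ≤ orient a b x) (hp : orient a b p < 0) :
    p ∉ convexHull ℝ T := by
  intro hmem
  have h0 : 0 ≤ orient a b p := convexHull_min (fun x hx => h x hx) (convex_halfplane a b) hmem
  linarith


lemma orient_ne_zero {a b c : ℝ × ℝ} (h : AffineIndependent ℝ ![a, b, c]) :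
    orient a b c ≠ 0 := by
  intro h0
  have hab : a ≠ b := by
    intro he
    have : (0 : Fin 3) = 1 := h.injective (show ![a,b,c] 0 = ![a,b,c] 1 by simp [he])
    simp at this
  have hne : (b.1 - a.1) ^ 2 + (b.2 - a.2) ^ 2 ≠ 0 := by
    intro hz
    apply hab
    have h1 : b.1 - a.1 = 0 := by nlinarith [sq_nonneg (b.1 - a.1), sq_nonneg (b.2 - a.2)]
    have h2 : b.2 - a.2 = 0 := by nlinarith [sq_nonneg (b.1 - a.1), sq_nonneg (b.2 - a.2)]
    have : a.1 = b.1 := by linarith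
    have : a.2 = b.2 := by linarith
    exact Prod.ext (by linarith) (by linarith)
  set t : ℝ := ((b.1 - a.1) * (c.1 - a.1) + (b.2 - a.2) * (c.2 - a.2)) /
      ((b.1 - a.1) ^ 2 + (b.2 - a.2) ^ 2) with ht
  have hc1 : c.1 - a.1 = t * (b.1 - a.1) := by
    rw [ht]; field_simp
    unfold orient at h0
    linear_combination (a.2 - b.2) * h0
  have hc2 : c.2 - a.2 = t * (b.2 - a.2) := by
    rw [ht]; field_simp
    unfold orient at h0
    linear_combination (b.1 - a.1) * h0
  have key := affineIndependent_iff.mp h Finset.univ ![t - 1, -t, 1]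
    (by simp [Fin.sum_univ_three]; ring)
    (by
      simp [Fin.sum_univ_three]
      apply Prod.ext <;> simp [Prod.fst_add, Prod.snd_add] <;> nlinarith [hc1, hc2])
  have := key 2 (Finset.mem_univ _)
  simp at this


lemma main_geom {m : ℕ} (hm : 3 ≤ m) (q : Fin m → ℝ × ℝ)
    (hq : ∀ i j k : Fin m, i < j → j < k → 0 < orient (q i) (q j) (q k))
    (j : Fin m) : q j ∉ convexHull ℝ (Set.range q \ {q j}) := by
  have hjv := j.isLt
  by_cases hj0 : j.val = 0
  · set a : Fin m := ⟨m - 1, by omega⟩ with ha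
    set b : Fin m := ⟨1, by omega⟩ with hb
    apply not_mem_hull (q a) (q b)
    · rintro x ⟨⟨k, rfl⟩, hxne⟩
      have hkj : k ≠ j := by rintro rfl; simp at hxne
      have hkv : k.val ≠ 0 := fun h => hkj (Fin.ext (by omega))
      rcases show k.val = 1 ∨ k.val = m - 1 ∨ (1 < k.val ∧ k.val < m - 1) by omega with h1 | h1 | h1
      · have : k = b := Fin.ext (by simp only [hb]; omega)
        rw [this, orient_self2]
      · have : k = a := Fin.ext (by simp only [ha]; omega)
        rw [this, orient_self3]
      · have := hq b k a (by simp only [Fin.lt_def, ha, hb]; omega)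
          (by simp only [Fin.lt_def, ha, hb]; omega)
        rw [orient_cyc]
        linarith
    · have := hq j b a (by simp only [Fin.lt_def, ha, hb]; omega)
        (by simp only [Fin.lt_def, ha, hb]; omega)
      rw [orient_cyc, orient_cyc, orient_swap]
      linarith
  · by_cases hjm : j.val = m - 1
    · set a : Fin m := ⟨m - 2, by omega⟩ with ha
      set b : Fin m := ⟨0, by omega⟩ with hb
      apply not_mem_hull (q a) (q b)
      · rintro x ⟨⟨k, rfl⟩, hxne⟩
        have hkj : k ≠ j := by rintro rfl; simp at hxne
        have hkv : k.val ≠ m - 1 := fun h => hkj (Fin.ext (by omega))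
        rcases show k.val = 0 ∨ k.val = m - 2 ∨ (0 < k.val ∧ k.val < m - 2) by omega with h1 | h1 | h1
        · have : k = b := Fin.ext (by simp only [hb]; omega)
          rw [this, orient_self2]
        · have : k = a := Fin.ext (by simp only [ha]; omega)
          rw [this, orient_self3]
        · have := hq b k a (by simp only [Fin.lt_def, ha, hb]; omega)
            (by simp only [Fin.lt_def, ha, hb]; omega)
          rw [orient_cyc]
          linarith
      · have := hq b a j (by simp only [Fin.lt_def, ha, hb]; omega)
          (by simp only [Fin.lt_def, ha, hb]; omega)
        rw [orient_swap12]
        linarith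
    · set a : Fin m := ⟨j.val - 1, by omega⟩ with ha
      set b : Fin m := ⟨j.val + 1, by omega⟩ with hb
      apply not_mem_hull (q a) (q b)
      · rintro x ⟨⟨k, rfl⟩, hxne⟩
        have hkj : k ≠ j := by rintro rfl; simp at hxne
        have hkv : k.val ≠ j.val := fun h => hkj (Fin.ext h)
        rcases show k.val = j.val - 1 ∨ k.val = j.val + 1 ∨ k.val < j.val - 1 ∨ j.val + 1 < k.val by omega with h1 | h1 | h1 | h1
        · have : k = a := Fin.ext (by simp only [ha]; omega)
          rw [this, orient_self3]
        · have : k = b := Fin.ext (by simp only [hb]; omega)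
          rw [this, orient_self2]
        · have := hq k a b (by simp only [Fin.lt_def, ha, hb]; omega)
            (by simp only [Fin.lt_def, ha, hb]; omega)
          rw [orient_cyc] at this
          linarith
        · have := hq a b k (by simp only [Fin.lt_def, ha, hb]; omega)
            (by simp only [Fin.lt_def, ha, hb]; omega)
          linarith
      · have := hq a j b (by simp only [Fin.lt_def, ha, hb]; omega)
          (by simp only [Fin.lt_def, ha, hb]; omega)
        rw [orient_swap]
        linarith


lemma ramsey2 : ∀ p q : ℕ, ∃ N : ℕ, ∀ (V : Finset ℕ) (c : ℕ → ℕ → Bool), N ≤ V.card →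
    (∃ T ⊆ V, T.card = p ∧ ∀ i ∈ T, ∀ j ∈ T, i < j → c i j = true) ∨
    (∃ T ⊆ V, T.card = q ∧ ∀ i ∈ T, ∀ j ∈ T, i < j → c i j = false) := by
  have H : ∀ s p q : ℕ, p + q = s → ∃ N : ℕ, ∀ (V : Finset ℕ) (c : ℕ → ℕ → Bool), N ≤ V.card →
      (∃ T ⊆ V, T.card = p ∧ ∀ i ∈ T, ∀ j ∈ T, i < j → c i j = true) ∨
      (∃ T ⊆ V, T.card = q ∧ ∀ i ∈ T, ∀ j ∈ T, i < j → c i j = false) := by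
    intro s
    induction s using Nat.strong_induction_on with
    | _ s ih =>
      intro p q hs
      match p, q with
      | 0, q =>
        exact ⟨0, fun V c _ => Or.inl ⟨∅, Finset.empty_subset _, Finset.card_empty,
          fun i hi => absurd hi (Finset.notMem_empty i)⟩⟩
      | p + 1, 0 =>
        exact ⟨0, fun V c _ => Or.inr ⟨∅, Finset.empty_subset _, Finset.card_empty,
          fun i hi => absurd hi (Finset.notMem_empty i)⟩⟩
      | p + 1, q + 1 =>
        obtain ⟨N1, hN1⟩ := ih (p + (q + 1)) (by omega) p (q + 1) rfl
        obtain ⟨N2, hN2⟩ := ih ((p + 1) + q) (by omega) (p + 1) q rfl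
        refine ⟨N1 + N2 + 1, fun V c hV => ?_⟩
        have hVne : V.Nonempty := Finset.card_pos.mp (by omega)
        set v := V.min' hVne with hv
        have hvV : v ∈ V := V.min'_mem hVne
        set W := V.erase v with hW
        have hWcard : N1 + N2 ≤ W.card := by
          rw [hW, Finset.card_erase_of_mem hvV]; omega
        set A := W.filter (fun u => c v u = true) with hA
        set B := W.filter (fun u => ¬(c v u = true)) with hB
        have hABcard : A.card + B.card = W.card := Finset.card_filter_add_card_filter_not _
        have hvlt : ∀ u ∈ W, v < u := by
          intro u hu
          have huV : u ∈ V := Finset.mem_of_mem_erase hu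
          have hne : u ≠ v := Finset.ne_of_mem_erase hu
          exact lt_of_le_of_ne (V.min'_le u huV) (Ne.symm hne)
        rcases le_or_gt N1 A.card with hcase | hcase
        · rcases hN1 A c hcase with ⟨T, hTA, hTcard, hTmono⟩ | ⟨T, hTA, hTcard, hTmono⟩
          · left
            have hvT : v ∉ T := fun hvt => by
              have := hvlt v (Finset.mem_of_mem_filter v (hTA hvt))
              omega
            refine ⟨insert v T, ?_, ?_, ?_⟩
            · intro x hx
              rcases Finset.mem_insert.mp hx with rfl | hx
              · exact hvV
              · exact Finset.mem_of_mem_erase (Finset.mem_of_mem_filter x (hTA hx))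
            · rw [Finset.card_insert_of_notMem hvT, hTcard]
            · intro i hi j hj hij
              rcases Finset.mem_insert.mp hi with rfl | hi
              · rcases Finset.mem_insert.mp hj with rfl | hj
                · omega
                · exact (Finset.mem_filter.mp (hTA hj)).2
              · rcases Finset.mem_insert.mp hj with rfl | hj
                · have := hvlt i (Finset.mem_of_mem_filter i (hTA hi)); omega
                · exact hTmono i hi j hj hij
          · right
            exact ⟨T, fun x hx => Finset.mem_of_mem_erase (Finset.mem_of_mem_filter x (hTA hx)),
              hTcard, hTmono⟩
        · have hc2 : N2 ≤ B.card := by omega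
          rcases hN2 B c hc2 with ⟨T, hTB, hTcard, hTmono⟩ | ⟨T, hTB, hTcard, hTmono⟩
          · left
            exact ⟨T, fun x hx => Finset.mem_of_mem_erase (Finset.mem_of_mem_filter x (hTB hx)),
              hTcard, hTmono⟩
          · right
            have hvT : v ∉ T := fun hvt => by
              have := hvlt v (Finset.mem_of_mem_filter v (hTB hvt))
              omega
            refine ⟨insert v T, ?_, ?_, ?_⟩
            · intro x hx
              rcases Finset.mem_insert.mp hx with rfl | hx
              · exact hvV
              · exact Finset.mem_of_mem_erase (Finset.mem_of_mem_filter x (hTB hx))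
            · rw [Finset.card_insert_of_notMem hvT, hTcard]
            · intro i hi j hj hij
              rcases Finset.mem_insert.mp hi with rfl | hi
              · rcases Finset.mem_insert.mp hj with rfl | hj
                · omega
                · have := (Finset.mem_filter.mp (hTB hj)).2
                  simpa using this
              · rcases Finset.mem_insert.mp hj with rfl | hj
                · have := hvlt i (Finset.mem_of_mem_filter i (hTB hi)); omega
                · exact hTmono i hi j hj hij
  exact fun p q => H (p + q) p q rfl


lemma ramsey3 : ∀ p q : ℕ, ∃ N : ℕ, ∀ (V : Finset ℕ) (c : ℕ → ℕ → ℕ → Bool), N ≤ V.card →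
    (∃ T ⊆ V, T.card = p ∧ ∀ i ∈ T, ∀ j ∈ T, ∀ k ∈ T, i < j → j < k → c i j k = true) ∨
    (∃ T ⊆ V, T.card = q ∧ ∀ i ∈ T, ∀ j ∈ T, ∀ k ∈ T, i < j → j < k → c i j k = false) := by
  have H : ∀ s p q : ℕ, p + q = s → ∃ N : ℕ, ∀ (V : Finset ℕ) (c : ℕ → ℕ → ℕ → Bool), N ≤ V.card →
      (∃ T ⊆ V, T.card = p ∧ ∀ i ∈ T, ∀ j ∈ T, ∀ k ∈ T, i < j → j < k → c i j k = true) ∨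
      (∃ T ⊆ V, T.card = q ∧ ∀ i ∈ T, ∀ j ∈ T, ∀ k ∈ T, i < j → j < k → c i j k = false) := by
    intro s
    induction s using Nat.strong_induction_on with
    | _ s ih =>
      intro p q hs
      match p, q with
      | 0, q =>
        exact ⟨0, fun V c _ => Or.inl ⟨∅, Finset.empty_subset _, Finset.card_empty,
          fun i hi => absurd hi (Finset.notMem_empty i)⟩⟩
      | p + 1, 0 =>
        exact ⟨0, fun V c _ => Or.inr ⟨∅, Finset.empty_subset _, Finset.card_empty,
          fun i hi => absurd hi (Finset.notMem_empty i)⟩⟩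
      | p + 1, q + 1 =>
        obtain ⟨Na, hNa⟩ := ih (p + (q + 1)) (by omega) p (q + 1) rfl
        obtain ⟨Nb, hNb⟩ := ih ((p + 1) + q) (by omega) (p + 1) q rfl
        obtain ⟨N2, hN2⟩ := ramsey2 Na Nb
        refine ⟨N2 + 1, fun V c hV => ?_⟩
        have hVne : V.Nonempty := Finset.card_pos.mp (by omega)
        set v := V.min' hVne with hv
        have hvV : v ∈ V := V.min'_mem hVne
        set W := V.erase v with hW
        have hWcard : N2 ≤ W.card := by
          rw [hW, Finset.card_erase_of_mem hvV]; omega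
        have hvlt : ∀ u ∈ W, v < u := by
          intro u hu
          have huV : u ∈ V := Finset.mem_of_mem_erase hu
          exact lt_of_le_of_ne (V.min'_le u huV) (Ne.symm (Finset.ne_of_mem_erase hu))
        have hWV : W ⊆ V := Finset.erase_subset _ _
        rcases hN2 W (fun i j => c v i j) hWcard with ⟨A, hAW, hAcard, hAmono⟩ | ⟨A, hAW, hAcard, hAmono⟩
        · rcases hNa A c (le_of_eq hAcard.symm) with ⟨T, hTA, hTcard, hTmono⟩ | ⟨T, hTA, hTcard, hTmono⟩
          · left
            have hvT : v ∉ T := fun hvt => by have := hvlt v (hAW (hTA hvt)); omega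
            refine ⟨insert v T, ?_, ?_, ?_⟩
            · intro x hx
              rcases Finset.mem_insert.mp hx with rfl | hx
              · exact hvV
              · exact hWV (hAW (hTA hx))
            · rw [Finset.card_insert_of_notMem hvT, hTcard]
            · intro i hi j hj k hk hij hjk
              rcases Finset.mem_insert.mp hi with rfl | hi
              · rcases Finset.mem_insert.mp hj with rfl | hj
                · omega
                · rcases Finset.mem_insert.mp hk with rfl | hk
                  · have := hvlt j (hAW (hTA hj)); omega
                  · exact hAmono j (hTA hj) k (hTA hk) hjk
              · rcases Finset.mem_insert.mp hj with rfl | hj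
                · have := hvlt i (hAW (hTA hi)); omega
                · rcases Finset.mem_insert.mp hk with rfl | hk
                  · have := hvlt i (hAW (hTA hi)); omega
                  · exact hTmono i hi j hj k hk hij hjk
          · right
            exact ⟨T, fun x hx => hWV (hAW (hTA hx)), hTcard, hTmono⟩
        · rcases hNb A c (le_of_eq hAcard.symm) with ⟨T, hTA, hTcard, hTmono⟩ | ⟨T, hTA, hTcard, hTmono⟩
          · left
            exact ⟨T, fun x hx => hWV (hAW (hTA hx)), hTcard, hTmono⟩
          · right
            have hvT : v ∉ T := fun hvt => by have := hvlt v (hAW (hTA hvt)); omega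
            refine ⟨insert v T, ?_, ?_, ?_⟩
            · intro x hx
              rcases Finset.mem_insert.mp hx with rfl | hx
              · exact hvV
              · exact hWV (hAW (hTA hx))
            · rw [Finset.card_insert_of_notMem hvT, hTcard]
            · intro i hi j hj k hk hij hjk
              rcases Finset.mem_insert.mp hi with rfl | hi
              · rcases Finset.mem_insert.mp hj with rfl | hj
                · omega
                · rcases Finset.mem_insert.mp hk with rfl | hk
                  · have := hvlt j (hAW (hTA hj)); omega
                  · exact hAmono j (hTA hj) k (hTA hk) hjk
              · rcases Finset.mem_insert.mp hj with rfl | hj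
                · have := hvlt i (hAW (hTA hi)); omega
                · rcases Finset.mem_insert.mp hk with rfl | hk
                  · have := hvlt i (hAW (hTA hi)); omega
                  · exact hTmono i hi j hj k hk hij hjk
  exact fun p q => H (p + q) p q rfl



/-- No three of the points of `S` are collinear. -/
def NoThreeCollinear (S : Set (ℝ × ℝ)) : Prop :=
  ∀ p ∈ S, ∀ q ∈ S, ∀ r ∈ S, p ≠ q → p ≠ r → q ≠ r →
    AffineIndependent ℝ ![p, q, r]

/-- A set of points is in convex position (convexly independent). -/
def ConvexIndep (S : Set (ℝ × ℝ)) : Prop :=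
  ∀ p ∈ S, p ∉ convexHull ℝ (S \ {p})

lemma build_T {n : ℕ} (hn : 3 ≤ n) (S : Finset (ℝ × ℝ)) (w : Fin n → ℝ × ℝ)
    (hwS : ∀ i, w i ∈ S)
    (hw : ∀ i j k : Fin n, i < j → j < k → 0 < orient (w i) (w j) (w k)) :
    ∃ T : Finset (ℝ × ℝ), T ⊆ S ∧ T.card = n ∧ ConvexIndep ↑T := by
  have key : ∀ i j : Fin n, i < j → w i ≠ w j := by
    intro i j hlt hij
    have hjn := j.isLt
    rcases show j.val < n - 1 ∨ (j.val = n - 1 ∧ 0 < i.val) ∨ (j.val = n - 1 ∧ i.val = 0)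
        by omega with h1 | ⟨h1, h2⟩ | ⟨h1, h2⟩
    · have := hw i j ⟨j.val + 1, by omega⟩ hlt (by simp [Fin.lt_def])
      rw [hij, orient_self1] at this
      exact lt_irrefl _ this
    · have := hw ⟨0, by omega⟩ i j (by simp [Fin.lt_def]; omega) hlt
      rw [hij, orient_self2] at this
      exact lt_irrefl _ this
    · have := hw i ⟨1, by omega⟩ j (by simp [Fin.lt_def]; omega) (by simp [Fin.lt_def]; omega)
      rw [hij, orient_self3] at this
      exact lt_irrefl _ this
  have hinj : Function.Injective w := by
    intro i j hij
    by_contra hne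
    rcases lt_or_gt_of_ne hne with h | h
    · exact key i j h hij
    · exact key j i h hij.symm
  refine ⟨Finset.image w Finset.univ, ?_, ?_, ?_⟩
  · intro x hx
    obtain ⟨i, _, rfl⟩ := Finset.mem_image.mp hx
    exact hwS i
  · rw [Finset.card_image_of_injective _ hinj, Finset.card_univ, Fintype.card_fin]
  · have hcoe : (↑(Finset.image w Finset.univ) : Set (ℝ × ℝ)) = Set.range w := by
      simp
    rw [hcoe]
    intro p hp
    obtain ⟨j, rfl⟩ := hp
    exact main_geom hn w hw j


theorem erdos_szekeres_happy_ending :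
    ∀ n : ℕ, 3 ≤ n → ∃ N : ℕ, 0 < N ∧
      ∀ S : Finset (ℝ × ℝ), S.card = N → NoThreeCollinear ↑S →
        ∃ T : Finset (ℝ × ℝ), T ⊆ S ∧ T.card = n ∧ ConvexIndep ↑T := by
  intro n hn
  obtain ⟨N, hN⟩ := ramsey3 n n
  refine ⟨max N 1, by omega, fun S hScard hS3 => ?_⟩
  set M := max N 1 with hM
  set L := S.toList with hL
  have hLlen : L.length = M := by rw [hL, Finset.length_toList, hScard]
  have hLnd : L.Nodup := Finset.nodup_toList S
  set f : ℕ → ℝ × ℝ := fun i => L.getD i (0, 0) with hf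
  have hfS : ∀ i < M, f i ∈ S := by
    intro i hi
    rw [hf]
    simp only
    rw [List.getD_eq_get _ _ ⟨i, by omega⟩]
    rw [← Finset.mem_toList]
    exact List.get_mem _ _
  have hfinj : ∀ i < M, ∀ j < M, f i = f j → i = j := by
    intro i hi j hj hij
    rw [hf] at hij
    simp only at hij
    rw [List.getD_eq_get _ _ ⟨i, by omega⟩, List.getD_eq_get _ _ ⟨j, by omega⟩] at hij
    have := (List.Nodup.get_inj_iff hLnd).mp hij
    simpa using congrArg Fin.val this
  set c : ℕ → ℕ → ℕ → Bool := fun i j k => decide (0 < orient (f i) (f j) (f k)) with hc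
  have hVcard : N ≤ (Finset.range M).card := by rw [Finset.card_range]; omega
  -- distinctness/affine independence for triples of indices in range M
  have horient : ∀ i < M, ∀ j < M, ∀ k < M, i < j → j < k → orient (f i) (f j) (f k) ≠ 0 := by
    intro i hi j hj k hk hij hjk
    apply orient_ne_zero
    apply hS3 _ (hfS i hi) _ (hfS j hj) _ (hfS k hk)
    · intro h; have := hfinj i hi j hj h; omega
    · intro h; have := hfinj i hi k hk h; omega
    · intro h; have := hfinj j hj k hk h; omega
  rcases hN (Finset.range M) c hVcard with ⟨T, hTV, hTcard, hTmono⟩ | ⟨T, hTV, hTcard, hTmono⟩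
  · -- positive orientation
    set e := T.orderIsoOfFin hTcard with he
    set w : Fin n → ℝ × ℝ := fun i => f ((e i : ℕ)) with hw
    apply build_T hn S w
    · intro i
      exact hfS _ (Finset.mem_range.mp (hTV (e i).2))
    · intro i j k hij hjk
      have h1 : ((e i : ℕ)) < ((e j : ℕ)) := by
        exact_mod_cast (e.lt_iff_lt.mpr hij)
      have h2 : ((e j : ℕ)) < ((e k : ℕ)) := by
        exact_mod_cast (e.lt_iff_lt.mpr hjk)
      have := hTmono _ (e i).2 _ (e j).2 _ (e k).2 h1 h2
      rw [hc] at this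
      simpa using this
  · -- negative orientation: reverse
    set e := T.orderIsoOfFin hTcard with he
    set w : Fin n → ℝ × ℝ := fun i => f ((e i.rev : ℕ)) with hw
    apply build_T hn S w
    · intro i
      exact hfS _ (Finset.mem_range.mp (hTV (e i.rev).2))
    · intro i j k hij hjk
      have h1 : ((e k.rev : ℕ)) < ((e j.rev : ℕ)) := by
        exact_mod_cast (e.lt_iff_lt.mpr (by
          rw [Fin.rev_lt_rev]; exact hjk))
      have h2 : ((e j.rev : ℕ)) < ((e i.rev : ℕ)) := by
        exact_mod_cast (e.lt_iff_lt.mpr (by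
          rw [Fin.rev_lt_rev]; exact hij))
      have hmem : ∀ a : Fin n, (e a.rev : ℕ) ∈ T := fun a => (e a.rev).2
      have hfalse := hTmono _ (hmem k) _ (hmem j) _ (hmem i) h1 h2
      rw [hc] at hfalse
      simp only [decide_eq_false_iff_not, not_lt] at hfalse
      have hne := horient _ (Finset.mem_range.mp (hTV (hmem k)))
        _ (Finset.mem_range.mp (hTV (hmem j))) _ (Finset.mem_range.mp (hTV (hmem i))) h1 h2
      rw [hw]
      simp only
      rw [orient_rev]
      have : orient (f (e k.rev : ℕ)) (f (e j.rev : ℕ)) (f (e i.rev : ℕ)) < 0 :=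
        lt_of_le_of_ne hfalse hne
      linarith
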